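/- Let c₁ ≥ 1, q ∈ (0,1], d ∈ ℕ, γ ∈ (0,1), and let τ ∈ (0,1) satisfy 2c₁τ^{2(1−γ)} ≤ 1, and δ₁ > 0 satisfy (min{c₁√δ₁, 1})^q ≤ τ^d. If ψ : ℕ → [0,∞) satisfies ψ(0) ≤ δ₁ and ψ(k+1) ≤ c₁·(1 + (min{c₁·ψ(k)^{1/2}, 1})^q·τ^{−d})·τ²·ψ(k) for all k ∈ ℕ, then ψ(k) ≤ τ^{2γk}·ψ(0) for all k ∈ ℕ. -/
import Mathlib


/-- the abstract iteration underlying the Morrey-decay estimate,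
Step 2 of the proof of Proposition 1.10. -/
theorem statement_14
    (c₁ q : ℝ) (hc₁ : 1 ≤ c₁) (hq : q ∈ Set.Ioc (0:ℝ) 1)
    (d : ℕ) (γ τ δ₁ : ℝ) (hγ : γ ∈ Set.Ioo (0:ℝ) 1) (hτ : τ ∈ Set.Ioo (0:ℝ) 1)
    (hτc : 2 * c₁ * τ ^ (2 * (1 - γ)) ≤ 1)
    (hδ₁ : 0 < δ₁) (hδ : (min (c₁ * Real.sqrt δ₁) 1) ^ q ≤ τ ^ (d : ℝ))
    (ψ : ℕ → ℝ) (hψ0 : ∀ k, 0 ≤ ψ k) (hψinit : ψ 0 ≤ δ₁)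
    (hrec : ∀ k : ℕ, ψ (k+1) ≤
      c₁ * (1 + (min (c₁ * Real.sqrt (ψ k)) 1) ^ q * τ ^ (-(d : ℝ))) * τ ^ (2:ℝ) * ψ k) :
    ∀ k : ℕ, ψ k ≤ τ ^ (2 * γ * (k : ℝ)) * ψ 0 := by
  obtain ⟨hq0, hq1⟩ := hq
  obtain ⟨hγ0, hγ1⟩ := hγ
  obtain ⟨hτ0, hτ1⟩ := hτ
  intro k
  induction k with
  | zero => simp
  | succ k ih =>
    have hτγk : τ ^ (2 * γ * (k : ℝ)) ≤ 1 :=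
      Real.rpow_le_one hτ0.le hτ1.le (by positivity)
    have hψk : ψ k ≤ δ₁ := by nlinarith [hψ0 0]
    have hτd : (0:ℝ) < τ ^ (d:ℝ) := Real.rpow_pos_of_pos hτ0 _
    have hmin : (min (c₁ * Real.sqrt (ψ k)) 1) ^ q ≤ τ ^ (d : ℝ) := by
      refine le_trans (Real.rpow_le_rpow ?_ ?_ hq0.le) hδ
      · exact le_min (by positivity) zero_le_one
      · exact min_le_min (mul_le_mul_of_nonneg_left
          (Real.sqrt_le_sqrt hψk) (by linarith)) le_rfl
    have hbr : (min (c₁ * Real.sqrt (ψ k)) 1) ^ q * τ ^ (-(d : ℝ)) ≤ 1 := by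
      have h1 : (min (c₁ * Real.sqrt (ψ k)) 1) ^ q * τ ^ (-(d : ℝ)) ≤
          τ ^ (d:ℝ) * τ ^ (-(d : ℝ)) :=
        mul_le_mul_of_nonneg_right hmin (Real.rpow_pos_of_pos hτ0 _).le
      calc _ ≤ τ ^ (d:ℝ) * τ ^ (-(d : ℝ)) := h1
        _ = τ ^ ((d:ℝ) + (-(d:ℝ))) := (Real.rpow_add hτ0 _ _).symm
        _ = 1 := by simp
    have hsplit : τ ^ (2:ℝ) = τ ^ (2 * (1 - γ)) * τ ^ (2 * γ) := by
      rw [← Real.rpow_add hτ0]; ring_nf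
    have hstep : ψ (k+1) ≤ τ ^ (2 * γ) * ψ k := by
      have h2 : ψ (k+1) ≤ c₁ * 2 * τ ^ (2:ℝ) * ψ k := by
        refine le_trans (hrec k) ?_
        have hτ2 : (0:ℝ) ≤ τ ^ (2:ℝ) := (Real.rpow_pos_of_pos hτ0 _).le
        have : c₁ * (1 + (min (c₁ * Real.sqrt (ψ k)) 1) ^ q * τ ^ (-(d : ℝ)))
            ≤ c₁ * 2 := by nlinarith
        exact mul_le_mul_of_nonneg_right
          (mul_le_mul_of_nonneg_right this hτ2) (hψ0 k)
      have h3 : c₁ * 2 * τ ^ (2:ℝ) ≤ τ ^ (2 * γ) := by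
        rw [hsplit, ← mul_assoc]
        have hγp : (0:ℝ) ≤ τ ^ (2 * γ) := (Real.rpow_pos_of_pos hτ0 _).le
        nlinarith [Real.rpow_pos_of_pos hτ0 (2 * (1 - γ))]
      exact le_trans h2 (mul_le_mul_of_nonneg_right h3 (hψ0 k))
    have hfinal : τ ^ (2 * γ) * ψ k ≤ τ ^ (2 * γ * ((k:ℝ)+1)) * ψ 0 := by
      have : τ ^ (2 * γ * ((k:ℝ)+1)) = τ ^ (2 * γ) * τ ^ (2 * γ * (k:ℝ)) := by
        rw [← Real.rpow_add hτ0]; ring_nf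
      rw [this, mul_assoc]
      exact mul_le_mul_of_nonneg_left ih (Real.rpow_pos_of_pos hτ0 _).le
    calc ψ (k+1) ≤ τ ^ (2 * γ) * ψ k := hstep
      _ ≤ τ ^ (2 * γ * ((k:ℝ)+1)) * ψ 0 := hfinal
      _ = τ ^ (2 * γ * ((k+1:ℕ):ℝ)) * ψ 0 := by push_cast; ring_nf
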